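/- Define, for a natural number n ≥ 3, the upper incomplete Gamma value Γ(n/2, 1) = ∫_1^∞ t^{n/2−1} e^{−t} dt, the constant C'_n = n^{n/2}·e·Γ(n/2,1)/2, and the Cheng–Li–Yau constant ε_CLY(n) = 1/(2n + 3 + 2·exp(2n·C'_n)). Then ε_CLY(n) > 0 for all n ≥ 3, ε_CLY(n) < ε_CLY(3) for all n > 3, and 2.2×10^{−10} < ε_CLY(3) < 2.4×10^{−10}. -/

import Mathlib

open MeasureTheory Real Set

/-- The upper incomplete Gamma function at `1`: `Γ(s,1) = ∫_1^∞ t^{s-1} e^{-t} dt`. -/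
noncomputable def gammaIncOne (s : ℝ) : ℝ :=
  ∫ t in Set.Ioi (1 : ℝ), t ^ (s - 1) * Real.exp (-t)

/-- The constant `C'_n = n^{n/2} · e · Γ(n/2, 1) / 2`. -/
noncomputable def C' (n : ℕ) : ℝ :=
  (n : ℝ) ^ ((n : ℝ) / 2) * Real.exp 1 * gammaIncOne ((n : ℝ) / 2) / 2

/-- The Cheng–Li–Yau constant `ε_CLY(n) = 1/(2n + 3 + 2 exp(2n C'_n))`. -/
noncomputable def epsCLY (n : ℕ) : ℝ :=
  1 / (2 * (n : ℝ) + 3 + 2 * Real.exp (2 * (n : ℝ) * C' n))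

namespace EpsCLYAux

lemma integrableOn_aux {s : ℝ} (hs : 0 < s) :
    IntegrableOn (fun t : ℝ => t ^ (s - 1) * Real.exp (-t)) (Set.Ioi 1) := by
  have h := (Real.GammaIntegral_convergent hs).mono_set (Set.Ioi_subset_Ioi zero_le_one)
  exact h.congr_fun (fun x _ => mul_comm _ _) measurableSet_Ioi

lemma gammaIncOne_nonneg (s : ℝ) : 0 ≤ gammaIncOne s := by
  refine setIntegral_nonneg measurableSet_Ioi fun x hx => ?_
  have h1 : (1 : ℝ) < x := hx
  exact mul_nonneg (Real.rpow_nonneg (by linarith) _) (Real.exp_pos _).le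

lemma gammaIncOne_mono {s₁ s₂ : ℝ} (h1 : 0 < s₁) (h : s₁ ≤ s₂) :
    gammaIncOne s₁ ≤ gammaIncOne s₂ := by
  refine setIntegral_mono_on (integrableOn_aux h1) (integrableOn_aux (lt_of_lt_of_le h1 h))
    measurableSet_Ioi fun x hx => ?_
  have hx1 : (1 : ℝ) < x := hx
  exact mul_le_mul_of_nonneg_right
    (Real.rpow_le_rpow_of_exponent_le hx1.le (by linarith)) (Real.exp_pos _).le

lemma exp_poly {x : ℝ} (h0 : 0 ≤ x) (h1 : x ≤ 1) :
    |Real.exp (-x) - (1 - x + x^2/2 - x^3/6 + x^4/24 - x^5/120 + x^6/720)| ≤ 1/4410 := by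
  have h := Real.exp_bound (x := -x) (by rwa [abs_neg, abs_of_nonneg h0]) (n := 7) (by norm_num)
  have hs : (∑ m ∈ Finset.range 7, (-x) ^ m / (m.factorial : ℝ)) =
      1 - x + x^2/2 - x^3/6 + x^4/24 - x^5/120 + x^6/720 := by
    simp [Finset.sum_range_succ, Nat.factorial]
    ring
  rw [hs, abs_neg, abs_of_nonneg h0] at h
  have h7 : x ^ 7 ≤ 1 := by
    calc x ^ 7 ≤ 1 ^ 7 := pow_le_pow_left₀ h0 h1 7
    _ = 1 := one_pow 7
  have hc : x ^ 7 * (((7:ℕ).succ : ℝ) / ((7:ℕ).factorial * 7)) ≤ 1/4410 := by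
    have : ((7:ℕ).succ : ℝ) / ((7:ℕ).factorial * 7) = 1/4410 := by
      norm_num [Nat.factorial]
    rw [this]
    nlinarith
  calc |Real.exp (-x) - (1 - x + x^2/2 - x^3/6 + x^4/24 - x^5/120 + x^6/720)|
      ≤ x ^ 7 * ((7:ℕ).succ / ((7:ℕ).factorial * 7)) := h
    _ ≤ 1/4410 := hc

/-- auxiliary polynomial-in-`√x` function -/
noncomputable def Q (c : ℝ) (x : ℝ) : ℝ :=
  c * x ^ ((1:ℝ)/2) - x ^ ((3:ℝ)/2) + (1/2) * x ^ ((5:ℝ)/2) - (1/6) * x ^ ((7:ℝ)/2)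
    + (1/24) * x ^ ((9:ℝ)/2) - (1/120) * x ^ ((11:ℝ)/2) + (1/720) * x ^ ((13:ℝ)/2)

lemma iR {r : ℝ} (hr : 0 ≤ r) : IntervalIntegrable (fun x : ℝ => x ^ r) volume 0 1 :=
  intervalIntegral.intervalIntegrable_rpow (Or.inl hr)

lemma hIr {r : ℝ} (hr : 0 ≤ r) : ∫ x in (0:ℝ)..1, x ^ r = 1/(r+1) := by
  rw [integral_rpow (Or.inl (by linarith : (-1:ℝ) < r))]
  rw [Real.one_rpow, Real.zero_rpow (by linarith : r + 1 ≠ 0)]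
  ring

lemma Q_integral (c : ℝ) : ∫ x in (0:ℝ)..1, Q c x =
    c * (2/3) - 2/5 + (1/2) * (2/7) - (1/6) * (2/9) + (1/24) * (2/11)
      - (1/120) * (2/13) + (1/720) * (2/15) := by
  have i1 := (iR (by norm_num : (0:ℝ) ≤ 1/2)).const_mul c
  have i2 := iR (by norm_num : (0:ℝ) ≤ 3/2)
  have i3 := (iR (by norm_num : (0:ℝ) ≤ 5/2)).const_mul ((1:ℝ)/2)
  have i4 := (iR (by norm_num : (0:ℝ) ≤ 7/2)).const_mul ((1:ℝ)/6)
  have i5 := (iR (by norm_num : (0:ℝ) ≤ 9/2)).const_mul ((1:ℝ)/24)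
  have i6 := (iR (by norm_num : (0:ℝ) ≤ 11/2)).const_mul ((1:ℝ)/120)
  have i7 := (iR (by norm_num : (0:ℝ) ≤ 13/2)).const_mul ((1:ℝ)/720)
  have s2 := i1.sub i2
  have s3 := s2.add i3
  have s4 := s3.sub i4
  have s5 := s4.add i5
  have s6 := s5.sub i6
  unfold Q
  rw [intervalIntegral.integral_add s6 i7, intervalIntegral.integral_sub s5 i6,
    intervalIntegral.integral_add s4 i5, intervalIntegral.integral_sub s3 i4,
    intervalIntegral.integral_add s2 i3, intervalIntegral.integral_sub i1 i2,
    intervalIntegral.integral_const_mul, intervalIntegral.integral_const_mul,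
    intervalIntegral.integral_const_mul, intervalIntegral.integral_const_mul,
    intervalIntegral.integral_const_mul, intervalIntegral.integral_const_mul,
    hIr (by norm_num : (0:ℝ) ≤ 1/2), hIr (by norm_num : (0:ℝ) ≤ 3/2),
    hIr (by norm_num : (0:ℝ) ≤ 5/2), hIr (by norm_num : (0:ℝ) ≤ 7/2),
    hIr (by norm_num : (0:ℝ) ≤ 9/2), hIr (by norm_num : (0:ℝ) ≤ 11/2),
    hIr (by norm_num : (0:ℝ) ≤ 13/2)]
  norm_num

lemma Q_intervalIntegrable (c : ℝ) : IntervalIntegrable (Q c) volume 0 1 := by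
  have i1 := (iR (by norm_num : (0:ℝ) ≤ 1/2)).const_mul c
  have i2 := iR (by norm_num : (0:ℝ) ≤ 3/2)
  have i3 := (iR (by norm_num : (0:ℝ) ≤ 5/2)).const_mul ((1:ℝ)/2)
  have i4 := (iR (by norm_num : (0:ℝ) ≤ 7/2)).const_mul ((1:ℝ)/6)
  have i5 := (iR (by norm_num : (0:ℝ) ≤ 9/2)).const_mul ((1:ℝ)/24)
  have i6 := (iR (by norm_num : (0:ℝ) ≤ 11/2)).const_mul ((1:ℝ)/120)
  have i7 := (iR (by norm_num : (0:ℝ) ≤ 13/2)).const_mul ((1:ℝ)/720)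
  exact (((((i1.sub i2).add i3).sub i4).add i5).sub i6).add i7

lemma Q_pointwise {x : ℝ} (h0 : 0 ≤ x) (h1 : x ≤ 1) :
    Q (1 - 1/4410) x ≤ Real.exp (-x) * x ^ ((3:ℝ)/2 - 1) ∧
      Real.exp (-x) * x ^ ((3:ℝ)/2 - 1) ≤ Q (1 + 1/4410) x := by
  rcases h0.eq_or_lt with h | hx
  · subst h
    unfold Q
    norm_num [Real.zero_rpow]
  · have hk : ∀ k : ℕ, x ^ ((k : ℝ) + 1/2) = x ^ k * x ^ ((1:ℝ)/2) := fun k => by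
      rw [Real.rpow_add hx, Real.rpow_natCast]
    have e1 : x ^ ((3:ℝ)/2) = x ^ (1:ℕ) * x ^ ((1:ℝ)/2) := by
      rw [show (3:ℝ)/2 = ((1:ℕ):ℝ) + 1/2 by norm_num]; exact hk 1
    have e2 : x ^ ((5:ℝ)/2) = x ^ (2:ℕ) * x ^ ((1:ℝ)/2) := by
      rw [show (5:ℝ)/2 = ((2:ℕ):ℝ) + 1/2 by norm_num]; exact hk 2
    have e3 : x ^ ((7:ℝ)/2) = x ^ (3:ℕ) * x ^ ((1:ℝ)/2) := by
      rw [show (7:ℝ)/2 = ((3:ℕ):ℝ) + 1/2 by norm_num]; exact hk 3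
    have e4 : x ^ ((9:ℝ)/2) = x ^ (4:ℕ) * x ^ ((1:ℝ)/2) := by
      rw [show (9:ℝ)/2 = ((4:ℕ):ℝ) + 1/2 by norm_num]; exact hk 4
    have e5 : x ^ ((11:ℝ)/2) = x ^ (5:ℕ) * x ^ ((1:ℝ)/2) := by
      rw [show (11:ℝ)/2 = ((5:ℕ):ℝ) + 1/2 by norm_num]; exact hk 5
    have e6 : x ^ ((13:ℝ)/2) = x ^ (6:ℕ) * x ^ ((1:ℝ)/2) := by
      rw [show (13:ℝ)/2 = ((6:ℕ):ℝ) + 1/2 by norm_num]; exact hk 6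
    have e0 : x ^ ((3:ℝ)/2 - 1) = x ^ ((1:ℝ)/2) := by norm_num
    have ht : (0:ℝ) ≤ x ^ ((1:ℝ)/2) := Real.rpow_nonneg h0 _
    have hb := abs_le.mp (exp_poly h0 h1)
    constructor
    · unfold Q
      rw [e0, e1, e2, e3, e4, e5, e6]
      have hle : (1 - x + x^2/2 - x^3/6 + x^4/24 - x^5/120 + x^6/720 - 1/4410) ≤
          Real.exp (-x) := by linarith [hb.1]
      calc (1 - 1/4410) * x ^ ((1:ℝ)/2) - x ^ (1:ℕ) * x ^ ((1:ℝ)/2)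
            + (1/2) * (x ^ (2:ℕ) * x ^ ((1:ℝ)/2)) - (1/6) * (x ^ (3:ℕ) * x ^ ((1:ℝ)/2))
            + (1/24) * (x ^ (4:ℕ) * x ^ ((1:ℝ)/2)) - (1/120) * (x ^ (5:ℕ) * x ^ ((1:ℝ)/2))
            + (1/720) * (x ^ (6:ℕ) * x ^ ((1:ℝ)/2))
          = (1 - x + x^2/2 - x^3/6 + x^4/24 - x^5/120 + x^6/720 - 1/4410) * x ^ ((1:ℝ)/2) := by
            ring
        _ ≤ Real.exp (-x) * x ^ ((1:ℝ)/2) := mul_le_mul_of_nonneg_right hle ht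
    · unfold Q
      rw [e0, e1, e2, e3, e4, e5, e6]
      have hle : Real.exp (-x) ≤
          (1 - x + x^2/2 - x^3/6 + x^4/24 - x^5/120 + x^6/720 + 1/4410) := by linarith [hb.2]
      calc Real.exp (-x) * x ^ ((1:ℝ)/2)
          ≤ (1 - x + x^2/2 - x^3/6 + x^4/24 - x^5/120 + x^6/720 + 1/4410) * x ^ ((1:ℝ)/2) :=
            mul_le_mul_of_nonneg_right hle ht
        _ = (1 + 1/4410) * x ^ ((1:ℝ)/2) - x ^ (1:ℕ) * x ^ ((1:ℝ)/2)
            + (1/2) * (x ^ (2:ℕ) * x ^ ((1:ℝ)/2)) - (1/6) * (x ^ (3:ℕ) * x ^ ((1:ℝ)/2))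
            + (1/24) * (x ^ (4:ℕ) * x ^ ((1:ℝ)/2)) - (1/120) * (x ^ (5:ℕ) * x ^ ((1:ℝ)/2))
            + (1/720) * (x ^ (6:ℕ) * x ^ ((1:ℝ)/2)) := by ring

lemma gammaIncOne_eq :
    gammaIncOne (3/2) =
      Real.sqrt π / 2 - ∫ x in (0:ℝ)..1, Real.exp (-x) * x ^ ((3:ℝ)/2 - 1) := by
  have h32 : (0:ℝ) < 3/2 := by norm_num
  have hconv := Real.GammaIntegral_convergent h32
  have hIoc : IntegrableOn (fun x : ℝ => Real.exp (-x) * x ^ ((3:ℝ)/2 - 1)) (Ioc 0 1) :=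
    hconv.mono_set Set.Ioc_subset_Ioi_self
  have hIoi : IntegrableOn (fun x : ℝ => Real.exp (-x) * x ^ ((3:ℝ)/2 - 1)) (Ioi 1) :=
    hconv.mono_set (Set.Ioi_subset_Ioi zero_le_one)
  have hsplit : Real.Gamma (3/2) =
      (∫ x in Ioc (0:ℝ) 1, Real.exp (-x) * x ^ ((3:ℝ)/2 - 1))
        + ∫ x in Ioi (1:ℝ), Real.exp (-x) * x ^ ((3:ℝ)/2 - 1) := by
    rw [Real.Gamma_eq_integral h32, ← Set.Ioc_union_Ioi_eq_Ioi (zero_le_one (α := ℝ)),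
      setIntegral_union (Set.Ioc_disjoint_Ioi le_rfl) measurableSet_Ioi hIoc hIoi]
  have hval : Real.Gamma (3/2) = Real.sqrt π / 2 := by
    rw [show (3:ℝ)/2 = 1/2 + 1 by norm_num, Real.Gamma_add_one (by norm_num),
      Real.Gamma_one_half_eq]
    ring
  have hright : (∫ x in Ioi (1:ℝ), Real.exp (-x) * x ^ ((3:ℝ)/2 - 1)) = gammaIncOne (3/2) := by
    rw [gammaIncOne]
    exact setIntegral_congr_fun measurableSet_Ioi fun x _ => mul_comm _ _
  rw [intervalIntegral.integral_of_le zero_le_one]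
  rw [hval, hright] at hsplit
  linarith

lemma intervalIntegrable_integrand :
    IntervalIntegrable (fun x : ℝ => Real.exp (-x) * x ^ ((3:ℝ)/2 - 1)) volume 0 1 := by
  rw [intervalIntegrable_iff_integrableOn_Ioc_of_le zero_le_one]
  exact (Real.GammaIntegral_convergent (by norm_num : (0:ℝ) < 3/2)).mono_set
    Set.Ioc_subset_Ioi_self

lemma G_bounds : (0.5071099 : ℝ) < gammaIncOne (3/2) ∧ gammaIncOne (3/2) < 0.5074127 := by
  have hJlo := intervalIntegral.integral_mono_on zero_le_one (Q_intervalIntegrable (1 - 1/4410))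
    intervalIntegrable_integrand (fun x hx => (Q_pointwise hx.1 hx.2).1)
  have hJhi := intervalIntegral.integral_mono_on zero_le_one intervalIntegrable_integrand
    (Q_intervalIntegrable (1 + 1/4410)) (fun x hx => (Q_pointwise hx.1 hx.2).2)
  rw [Q_integral] at hJlo hJhi
  have hπlo : (1.7724536 : ℝ) < Real.sqrt π := by
    rw [show (1.7724536 : ℝ) = Real.sqrt (1.7724536^2) by
      rw [Real.sqrt_sq (by norm_num)]]
    exact Real.sqrt_lt_sqrt (by positivity) (by nlinarith [Real.pi_gt_d6])
  have hπhi : Real.sqrt π < 1.7724541 := by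
    rw [show (1.7724541 : ℝ) = Real.sqrt (1.7724541^2) by
      rw [Real.sqrt_sq (by norm_num)]]
    exact Real.sqrt_lt_sqrt Real.pi_nonneg (by nlinarith [Real.pi_lt_d6])
  rw [gammaIncOne_eq]
  constructor <;> [nlinarith [hπlo, hJhi]; nlinarith [hπhi, hJlo]]

end EpsCLYAux

open EpsCLYAux in
theorem epsCLY_props :
    (∀ n : ℕ, 3 ≤ n → 0 < epsCLY n) ∧
    (∀ n : ℕ, 3 < n → epsCLY n < epsCLY 3) ∧
    (2.2e-10 : ℝ) < epsCLY 3 ∧ epsCLY 3 < (2.4e-10 : ℝ) := by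
  obtain ⟨hGl, hGu⟩ := G_bounds
  have hG0 : (0:ℝ) ≤ gammaIncOne (3/2) := gammaIncOne_nonneg _
  -- √3 bounds
  have hs3l : (1.7320508 : ℝ) < Real.sqrt 3 := by
    rw [show (1.7320508 : ℝ) = Real.sqrt (1.7320508^2) by rw [Real.sqrt_sq (by norm_num)]]
    exact Real.sqrt_lt_sqrt (by positivity) (by norm_num)
  have hs3u : Real.sqrt 3 < 1.7320509 := by
    rw [show (1.7320509 : ℝ) = Real.sqrt (1.7320509^2) by rw [Real.sqrt_sq (by norm_num)]]
    exact Real.sqrt_lt_sqrt (by norm_num) (by norm_num)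
  have hel : (2.7182818283 : ℝ) < Real.exp 1 := Real.exp_one_gt_d9
  have heu : Real.exp 1 < 2.7182818286 := Real.exp_one_lt_d9
  -- C' 3 expression
  have hC3 : C' 3 = 3 * Real.sqrt 3 * Real.exp 1 * gammaIncOne (3/2) / 2 := by
    rw [C']
    norm_num
    rw [show ((3:ℝ)) ^ ((3:ℝ)/2) = 3 * Real.sqrt 3 by
      rw [show (3:ℝ)/2 = 1 + 1/2 by norm_num, Real.rpow_add (by norm_num), Real.rpow_one,
        ← Real.sqrt_eq_rpow]]
    exact Or.inl rfl
  -- bounds on y := 2 * 3 * C' 3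
  have hylo : (21.488 : ℝ) < 2 * (3:ℝ) * C' 3 := by
    have m1 : (1.7320508 : ℝ) * 2.7182818283 < Real.sqrt 3 * Real.exp 1 :=
      mul_lt_mul'' hs3l hel (by norm_num) (by norm_num)
    have m2 : ((1.7320508 : ℝ) * 2.7182818283) * 0.5071099 <
        (Real.sqrt 3 * Real.exp 1) * gammaIncOne (3/2) :=
      mul_lt_mul'' m1 hGl (by positivity) (by norm_num)
    rw [hC3]; nlinarith [m2]
  have hyhi : 2 * (3:ℝ) * C' 3 < 21.5011 := by
    have m1 : Real.sqrt 3 * Real.exp 1 < (1.7320509 : ℝ) * 2.7182818286 :=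
      mul_lt_mul'' hs3u heu (Real.sqrt_nonneg 3) (Real.exp_pos 1).le
    have m2 : (Real.sqrt 3 * Real.exp 1) * gammaIncOne (3/2) <
        ((1.7320509 : ℝ) * 2.7182818286) * 0.5074127 :=
      mul_lt_mul'' m1 hGu (by positivity) hG0
    rw [hC3]; nlinarith [m2]
  -- exp bounds
  have hexp_lo : (2132809454 : ℝ) < Real.exp (2 * (3:ℝ) * C' 3) := by
    have key : (2132809454 : ℝ) < Real.exp 21.488 := by
      have ha : (1 + 0.488/16 : ℝ) ≤ Real.exp (0.488/16) := by
        have := Real.add_one_le_exp (0.488/16 : ℝ); linarith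
      have hpow : ((1 + 0.488/16 : ℝ)) ^ (16:ℕ) ≤ Real.exp (0.488/16) ^ (16:ℕ) :=
        pow_le_pow_left₀ (by norm_num) ha 16
      have he16 : Real.exp (0.488/16) ^ (16:ℕ) = Real.exp 0.488 := by
        rw [← Real.exp_nat_mul]; norm_num
      have he21 : Real.exp 1 ^ (21:ℕ) = Real.exp 21 := by
        rw [← Real.exp_nat_mul]; norm_num
      have hbase : (2.7182818283 : ℝ) ^ (21:ℕ) ≤ Real.exp 1 ^ (21:ℕ) :=
        pow_le_pow_left₀ (by norm_num) hel.le 21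
      have hsplit : Real.exp 21 * Real.exp 0.488 = Real.exp 21.488 := by
        rw [← Real.exp_add]; norm_num
      have hnum : (2132809454 : ℝ) < (2.7182818283:ℝ) ^ (21:ℕ) * (1 + 0.488/16) ^ (16:ℕ) := by
        norm_num
      calc (2132809454 : ℝ) < (2.7182818283:ℝ) ^ (21:ℕ) * (1 + 0.488/16) ^ (16:ℕ) := hnum
        _ ≤ Real.exp 1 ^ (21:ℕ) * Real.exp (0.488/16) ^ (16:ℕ) := by
            have h1 : (0:ℝ) ≤ (2.7182818283:ℝ) ^ (21:ℕ) := by positivity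
            have h2 : (0:ℝ) ≤ ((1 + 0.488/16 : ℝ)) ^ (16:ℕ) := by positivity
            exact mul_le_mul hbase hpow h2 (by positivity)
        _ = Real.exp 21 * Real.exp 0.488 := by rw [he16, he21]
        _ = Real.exp 21.488 := hsplit
    exact lt_trans key (Real.exp_lt_exp.mpr hylo)
  have hexp_hi : Real.exp (2 * (3:ℝ) * C' 3) < (2194268781 : ℝ) := by
    have key : Real.exp 21.5011 < (2194268781 : ℝ) := by
      have ha : Real.exp (0.5011/16 : ℝ) ≤ 1 / (1 - 0.5011/16) := by
        have h1 := Real.add_one_le_exp (-(0.5011/16) : ℝ)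
        rw [Real.exp_neg] at h1
        have hp := Real.exp_pos (0.5011/16 : ℝ)
        rw [le_div_iff₀ (by norm_num : (0:ℝ) < 1 - 0.5011/16)]
        have h2 := mul_le_mul_of_nonneg_right h1 hp.le
        rw [inv_mul_cancel₀ hp.ne'] at h2
        nlinarith
      have hpow : Real.exp (0.5011/16) ^ (16:ℕ) ≤ ((1:ℝ) / (1 - 0.5011/16)) ^ (16:ℕ) :=
        pow_le_pow_left₀ (Real.exp_pos _).le ha 16
      have he16 : Real.exp (0.5011/16) ^ (16:ℕ) = Real.exp 0.5011 := by
        rw [← Real.exp_nat_mul]; norm_num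
      have he21 : Real.exp 1 ^ (21:ℕ) = Real.exp 21 := by
        rw [← Real.exp_nat_mul]; norm_num
      have hbase : Real.exp 1 ^ (21:ℕ) ≤ (2.7182818286 : ℝ) ^ (21:ℕ) :=
        pow_le_pow_left₀ (Real.exp_pos _).le heu.le 21
      have hsplit : Real.exp 21 * Real.exp 0.5011 = Real.exp 21.5011 := by
        rw [← Real.exp_add]; norm_num
      calc Real.exp 21.5011 = Real.exp 21 * Real.exp 0.5011 := hsplit.symm
        _ = Real.exp 1 ^ (21:ℕ) * Real.exp (0.5011/16) ^ (16:ℕ) := by rw [he16, he21]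
        _ ≤ (2.7182818286:ℝ) ^ (21:ℕ) * ((1:ℝ) / (1 - 0.5011/16)) ^ (16:ℕ) := by
            exact mul_le_mul hbase hpow (by positivity) (by positivity)
        _ < 2194268781 := by norm_num
    exact lt_trans (Real.exp_lt_exp.mpr hyhi) key
  refine ⟨?_, ?_, ?_, ?_⟩
  · intro n _
    rw [epsCLY]
    positivity
  · intro n hn
    have hn4 : (4:ℝ) ≤ (n:ℝ) := by exact_mod_cast hn
    have hGn : gammaIncOne (3/2) ≤ gammaIncOne ((n:ℝ)/2) :=
      gammaIncOne_mono (by norm_num) (by linarith)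
    have hpow : (3:ℝ) ^ ((3:ℝ)/2) ≤ (n:ℝ) ^ ((n:ℝ)/2) := by
      calc (3:ℝ) ^ ((3:ℝ)/2) ≤ (n:ℝ) ^ ((3:ℝ)/2) :=
            Real.rpow_le_rpow (by norm_num) (by linarith) (by norm_num)
        _ ≤ (n:ℝ) ^ ((n:ℝ)/2) :=
            Real.rpow_le_rpow_of_exponent_le (by linarith) (by linarith)
    have hC3n : C' 3 ≤ C' n := by
      rw [C', C']
      push_cast
      have h1 : (0:ℝ) ≤ (3:ℝ) ^ ((3:ℝ)/2) := by positivity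
      have h2 : (0:ℝ) ≤ Real.exp 1 := (Real.exp_pos 1).le
      nlinarith [hG0, hGn, gammaIncOne_nonneg ((n:ℝ)/2), hpow,
        mul_le_mul hpow hGn hG0 (by positivity : (0:ℝ) ≤ (n:ℝ) ^ ((n:ℝ)/2)),
        Real.exp_pos 1]
    have hC30 : 0 ≤ C' 3 := by
      rw [hC3]
      positivity
    have hexp_mono : Real.exp (2 * (3:ℝ) * C' 3) ≤ Real.exp (2 * (n:ℝ) * C' n) := by
      apply Real.exp_le_exp.mpr
      nlinarith [hC3n, hC30, hn4]
    rw [epsCLY, epsCLY]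
    push_cast
    apply one_div_lt_one_div_of_lt
    · positivity
    · have := Real.exp_pos (2 * (3:ℝ) * C' 3)
      linarith
  · rw [epsCLY]
    push_cast
    rw [lt_div_iff₀ (by positivity)]
    have h9 : (2*3+3+2*Real.exp (2 * (3:ℝ) * C' 3) : ℝ) < 4388537571 := by linarith
    calc (2.2e-10:ℝ) * (2*3+3+2*Real.exp (2 * (3:ℝ) * C' 3)) < 2.2e-10 * 4388537571 := by
          exact mul_lt_mul_of_pos_left h9 (by norm_num)
      _ < 1 := by norm_num
  · rw [epsCLY]
    push_cast
    rw [div_lt_iff₀ (by positivity)]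
    have h9 : (4265618917:ℝ) < 2*3+3+2*Real.exp (2 * (3:ℝ) * C' 3) := by linarith
    calc (1:ℝ) < 2.4e-10 * 4265618917 := by norm_num
      _ < 2.4e-10 * (2*3+3+2*Real.exp (2 * (3:ℝ) * C' 3)) := by
          exact mul_lt_mul_of_pos_left h9 (by norm_num)
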